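/- If β : ℂ^l → (ℂ*)^k is an injective Lie group morphism such that the image of β intersects (S¹)^k in a set of real dimension 0, then l ≤ k/2. -/
import Mathlib


/-- If `β = exp ∘ B : ℂ^l → (ℂ*)^k` is an injective Lie group morphism
(`B` being the ℂ-linear differential) whose image meets `(S¹)^k` in real dimension `0`
(equivalently `B(ℂ^l) ∩ (iℝ)^k = 0`), then `l ≤ k/2`. -/
theorem stmt5 (l k : ℕ) (B : (Fin l → ℂ) →ₗ[ℂ] (Fin k → ℂ))
    (hinj : Function.Injective (fun z : Fin l → ℂ => fun i : Fin k => Complex.exp (B z i)))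
    (htorus : ∀ z : Fin l → ℂ, (∀ i, (B z i).re = 0) → B z = 0) :
    2 * l ≤ k := by
  -- The real-linear map z ↦ (Re (B z i))_i
  set L : (Fin l → ℂ) →ₗ[ℝ] (Fin k → ℝ) :=
    LinearMap.pi (fun i => Complex.reLm.comp
      ((LinearMap.proj i).comp (B.restrictScalars ℝ))) with hL
  have hLinj : Function.Injective L := by
    rw [← LinearMap.ker_eq_bot, LinearMap.ker_eq_bot']
    intro z hz
    have hre : ∀ i, (B z i).re = 0 := by
      intro i
      have := congrFun hz i
      simpa [hL] using this
    have hBz : B z = 0 := htorus z hre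
    have : (fun i : Fin k => Complex.exp (B z i)) =
        (fun i : Fin k => Complex.exp (B 0 i)) := by
      simp [hBz]
    exact hinj this
  have h1 : Module.finrank ℝ (Fin l → ℂ) ≤ Module.finrank ℝ (Fin k → ℝ) :=
    LinearMap.finrank_le_finrank_of_injective hLinj
  simpa [Module.finrank_pi_fintype, Complex.finrank_real_complex, mul_comm] using h1
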